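/- Let X be a metric space, L ≥ 0, and γ : ℝ → X a map with dist(γ a, γ b) = |a − b| for all a, b ∈ [0, L]. Let u ∈ X and ε > 0. Then there exists a finite set A ⊆ [0, L] with (|A| : ℝ) ≤ 4/ε + 1 such that for every t ∈ [0, L] there is a ∈ A with dist(u, γ a) + |a − t| ≤ (1 + ε) · dist(u, γ t). -/

import Mathlib

open Set

/-- Greedy one-sided anchor construction: induction on the potential budget. -/
private lemma anchor_aux (d : ℝ → ℝ) (c R m ε : ℝ) (hε : 0 < ε) (hm : 0 < m)
    (hdm : ∀ t ∈ Icc c R, m ≤ d t)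
    (htwo : ∀ t ∈ Icc c R, t - c ≤ d t + m)
    (hcont : ContinuousOn d (Icc c R)) :
    ∀ n : ℕ, ∀ a ∈ Icc c R, m - ((a - c) - d a) < n * (ε * m) →
      ∃ A : Finset ℝ, (A : Set ℝ) ⊆ Icc a R ∧ a ∈ A ∧ A.card ≤ n ∧
        ∀ t ∈ Icc a R, ∃ x ∈ A, x ≤ t ∧ d x + (t - x) ≤ (1 + ε) * d t := by
  intro n
  induction n with
  | zero =>
    intro a ha hbud
    exfalso
    have := htwo a ha
    simp only [Nat.cast_zero, zero_mul] at hbud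
    linarith
  | succ n IH =>
    intro a ha hbud
    by_cases hU : ∀ t ∈ Icc a R, d a + (t - a) ≤ (1 + ε) * d t
    · refine ⟨({a} : Finset ℝ), ?_, Finset.mem_singleton_self a, by simp, ?_⟩
      · intro x hx
        simp only [Finset.coe_singleton, mem_singleton_iff] at hx
        subst hx
        exact ⟨le_refl _, ha.2⟩
      · intro t ht
        exact ⟨a, Finset.mem_singleton_self a, ht.1, hU t ht⟩
    · push_neg at hU
      set U : Set ℝ := {t | t ∈ Icc a R ∧ (1 + ε) * d t < d a + (t - a)} with hUdef
      have hUne : U.Nonempty := by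
        obtain ⟨t, ht, hlt⟩ := hU
        exact ⟨t, ht, hlt⟩
      have hbdd : BddBelow U := ⟨a, fun x hx => hx.1.1⟩
      set b := sInf U with hbdef
      have hab : a ≤ b := le_csInf hUne (fun x hx => hx.1.1)
      have hbR : b ≤ R := by
        obtain ⟨x, hx⟩ := hUne
        exact le_trans (csInf_le hbdd hx) hx.1.2
      have hbIcc : b ∈ Icc a R := ⟨hab, hbR⟩
      have hbIcc' : b ∈ Icc c R := ⟨le_trans ha.1 hab, hbR⟩
      have haIcc' : Icc a R ⊆ Icc c R := Icc_subset_Icc_left ha.1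
      -- key: at b the covering condition from a fails non-strictly
      have hkey : (1 + ε) * d b ≤ d a + (b - a) := by
        by_contra hk
        push_neg at hk
        -- the function g is continuous within Icc a R at b and positive at b
        have hg : ContinuousWithinAt (fun t => (1 + ε) * d t - (d a + (t - a)))
            (Icc a R) b := by
          apply ContinuousWithinAt.sub
          · exact (continuousWithinAt_const.mul ((hcont.mono haIcc') b hbIcc))
          · exact (continuousWithinAt_const.add
              (continuousWithinAt_id.sub continuousWithinAt_const))
        have hpos : (0 : ℝ) < (1 + ε) * d b - (d a + (b - a)) := by linarith
        have hmem : (fun t => (1 + ε) * d t - (d a + (t - a))) ⁻¹' (Ioi 0)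
            ∈ nhdsWithin b (Icc a R) := hg (Ioi_mem_nhds hpos)
        rw [Metric.mem_nhdsWithin_iff] at hmem
        obtain ⟨δ, hδ, hsub⟩ := hmem
        obtain ⟨x, hxU, hxlt⟩ := (csInf_lt_iff hbdd hUne).mp
          (show sInf U < b + δ by rw [← hbdef]; linarith)
        have hxb : b ≤ x := csInf_le hbdd hxU
        have hxball : x ∈ Metric.ball b δ := by
          rw [Metric.mem_ball, Real.dist_eq, abs_of_nonneg (by linarith)]
          linarith
        have := hsub ⟨hxball, hxU.1⟩
        simp only [mem_preimage, mem_Ioi] at this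
        have := hxU.2
        linarith
      -- potential step
      have hdb : m ≤ d b := hdm b hbIcc'
      have hbud' : m - ((b - c) - d b) < n * (ε * m) := by
        have h1 : ε * m ≤ ε * d b := mul_le_mul_of_nonneg_left hdb hε.le
        have h2 : ((n : ℝ) + 1) * (ε * m) = n * (ε * m) + ε * m := by ring
        push_cast at hbud
        nlinarith
      obtain ⟨A', hA'sub, hbA', hA'card, hA'cov⟩ := IH b hbIcc' hbud'
      refine ⟨insert a A', ?_, Finset.mem_insert_self a A', ?_, ?_⟩
      · intro x hx
        simp only [Finset.coe_insert, mem_insert_iff] at hx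
        rcases hx with rfl | hx
        · exact ⟨le_refl x, ha.2⟩
        · exact Icc_subset_Icc_left hab (hA'sub hx)
      · exact le_trans (Finset.card_insert_le a A') (by omega)
      · intro t ht
        rcases lt_or_ge t b with htb | htb
        · refine ⟨a, Finset.mem_insert_self a A', ht.1, ?_⟩
          by_contra hc2
          push_neg at hc2
          have : t ∈ U := ⟨ht, hc2⟩
          have := csInf_le hbdd this
          rw [← hbdef] at this
          linarith
        · obtain ⟨x, hxA, hxt, hxcov⟩ := hA'cov t ⟨htb, ht.2⟩
          exact ⟨x, Finset.mem_insert_of_mem hxA, hxt, hxcov⟩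

/-- One-sided anchor set of size at most `2/ε + 1` containing the minimum point `c`. -/
private lemma anchor_onesided (d : ℝ → ℝ) (c R m ε : ℝ) (hε : 0 < ε) (hm : 0 < m)
    (hcR : c ≤ R) (hdc : d c = m)
    (hdm : ∀ t ∈ Icc c R, m ≤ d t)
    (htwo : ∀ t ∈ Icc c R, t - c ≤ d t + m)
    (hcont : ContinuousOn d (Icc c R)) :
    ∃ A : Finset ℝ, (A : Set ℝ) ⊆ Icc c R ∧ c ∈ A ∧ (A.card : ℝ) ≤ 2 / ε + 1 ∧
      ∀ t ∈ Icc c R, ∃ x ∈ A, x ≤ t ∧ d x + (t - x) ≤ (1 + ε) * d t := by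
  have hcIcc : c ∈ Icc c R := ⟨le_refl c, hcR⟩
  have hfl : (2 / ε : ℝ) < (Nat.floor (2 / ε) : ℝ) + 1 := Nat.lt_floor_add_one _
  have hbud : m - ((c - c) - d c) < (Nat.floor (2 / ε) + 1 : ℕ) * (ε * m) := by
    have h1 : (2 / ε) * (ε * m) = 2 * m := by field_simp
    have h2 : (2 / ε) * (ε * m) < ((Nat.floor (2 / ε) : ℝ) + 1) * (ε * m) :=
      mul_lt_mul_of_pos_right hfl (by positivity)
    push_cast
    rw [hdc]
    linarith
  obtain ⟨A, hsub, hmem, hcard, hcov⟩ :=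
    anchor_aux d c R m ε hε hm hdm htwo hcont (Nat.floor (2 / ε) + 1) c hcIcc hbud
  refine ⟨A, hsub, hmem, ?_, hcov⟩
  have h3 : (A.card : ℝ) ≤ (Nat.floor (2 / ε) : ℝ) + 1 := by exact_mod_cast hcard
  have h4 : (Nat.floor (2 / ε) : ℝ) ≤ 2 / ε := Nat.floor_le (by positivity)
  linarith

/-- The continuous anchor-point property (the paper's Lemmas 8, 9, and 11): for a
geodesic `γ` parametrized by arc length on `[0, L]` in a metric space and a point `u`,
there are at most `4/ε + 1` anchor parameters `A ⊆ [0, L]` such that every point `γ t`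
of the path is `(1+ε)`-approximately reached from `u` via some anchor. -/
theorem continuous_anchor_points
    {X : Type*} [MetricSpace X]
    (L : ℝ) (hL : 0 ≤ L) (γ : ℝ → X)
    (hγ : ∀ a ∈ Set.Icc (0 : ℝ) L, ∀ b ∈ Set.Icc (0 : ℝ) L,
      dist (γ a) (γ b) = |a - b|)
    (u : X) (ε : ℝ) (hε : 0 < ε) :
    ∃ A : Finset ℝ, (A : Set ℝ) ⊆ Set.Icc (0 : ℝ) L ∧ (A.card : ℝ) ≤ 4 / ε + 1 ∧
      ∀ t ∈ Set.Icc (0 : ℝ) L,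
        ∃ a ∈ A, dist u (γ a) + |a - t| ≤ (1 + ε) * dist u (γ t) := by
  set d : ℝ → ℝ := fun t => dist u (γ t) with hd
  have hlip : LipschitzOnWith 1 d (Icc 0 L) := by
    apply LipschitzOnWith.of_dist_le_mul
    intro x hx y hy
    rw [Real.dist_eq, NNReal.coe_one, one_mul, Real.dist_eq, ← hγ x hx y hy]
    have h1 : dist (γ x) (γ y) = dist (γ y) (γ x) := dist_comm _ _
    calc |d x - d y| = |dist (γ x) u - dist (γ y) u| := by
          simp only [hd, dist_comm u]
      _ ≤ dist (γ x) (γ y) := abs_dist_sub_le _ _ _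
  have hcont : ContinuousOn d (Icc 0 L) := hlip.continuousOn
  obtain ⟨c, hcIcc, hminOn⟩ := isCompact_Icc.exists_isMinOn
    (nonempty_Icc.mpr hL) hcont
  have hmin : ∀ t ∈ Icc 0 L, d c ≤ d t := fun t ht => hminOn ht
  by_cases hm0 : d c = 0
  · -- the path passes through u (up to distance 0); one anchor suffices
    refine ⟨{c}, ?_, ?_, ?_⟩
    · intro x hx
      simp only [Finset.coe_singleton, mem_singleton_iff] at hx
      subst hx; exact hcIcc
    · simp only [Finset.card_singleton, Nat.cast_one]
      have : 0 < 4 / ε := by positivity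
      linarith
    · intro t ht
      refine ⟨c, by simp, ?_⟩
      have h1 : |c - t| = dist (γ c) (γ t) := (hγ c hcIcc t ht).symm
      have h2 : dist (γ c) (γ t) ≤ dist (γ c) u + dist u (γ t) := dist_triangle _ _ _
      have h3 : dist (γ c) u = d c := dist_comm _ _
      have h4 : (0 : ℝ) ≤ dist u (γ t) := dist_nonneg
      have h5 : dist u (γ c) = d c := rfl
      rw [h5, h1, hm0]
      nlinarith
  · have hm : 0 < d c := lt_of_le_of_ne dist_nonneg (Ne.symm hm0)
    set m := d c with hmdef
    -- right side: interval [c, L]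
    have hsubR : Icc c L ⊆ Icc 0 L := Icc_subset_Icc_left hcIcc.1
    obtain ⟨AR, hRsub, hRc, hRcard, hRcov⟩ :=
      anchor_onesided d c L m ε hε hm hcIcc.2 rfl
        (fun t ht => hmin t (hsubR ht))
        (fun t ht => by
          have h1 : t - c ≤ |t - c| := le_abs_self _
          have h2 : |t - c| = dist (γ t) (γ c) := (hγ t (hsubR ht) c hcIcc).symm
          have h3 : dist (γ t) (γ c) ≤ dist (γ t) u + dist u (γ c) := dist_triangle _ _ _
          have h4 : dist (γ t) u = d t := dist_comm _ _
          have h5 : dist u (γ c) = m := rfl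
          linarith)
        (hcont.mono hsubR)
    -- left side: reflect through c
    have hmapsTo : ∀ s ∈ Icc c (2 * c), 2 * c - s ∈ Icc 0 L := by
      intro s hs
      exact ⟨by linarith [hs.2], by linarith [hs.1, hcIcc.2]⟩
    obtain ⟨AL', hLsub, hLc, hLcard, hLcov⟩ :=
      anchor_onesided (fun s => d (2 * c - s)) c (2 * c) m ε hε hm
        (by linarith [hcIcc.1])
        (by rw [show 2 * c - c = c by ring])
        (fun s hs => hmin _ (hmapsTo s hs))
        (fun s hs => by
          have h1 : s - c ≤ |(2 * c - s) - c| := by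
            rw [show (2 * c - s) - c = -(s - c) by ring, abs_neg]
            exact le_abs_self _
          have h2 : |(2 * c - s) - c| = dist (γ (2 * c - s)) (γ c) :=
            (hγ _ (hmapsTo s hs) c hcIcc).symm
          have h3 : dist (γ (2 * c - s)) (γ c) ≤ dist (γ (2 * c - s)) u + dist u (γ c) :=
            dist_triangle _ _ _
          have h4 : dist (γ (2 * c - s)) u = d (2 * c - s) := dist_comm _ _
          have h5 : dist u (γ c) = m := rfl
          linarith)
        (hcont.comp ((continuous_const.sub continuous_id).continuousOn) hmapsTo)
    set AL : Finset ℝ := AL'.image (fun x => 2 * c - x) with hALdef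
    have hcAL : c ∈ AL := by
      rw [hALdef, Finset.mem_image]
      exact ⟨c, hLc, by ring⟩
    refine ⟨AR ∪ AL, ?_, ?_, ?_⟩
    · intro x hx
      simp only [Finset.coe_union, mem_union] at hx
      rcases hx with hx | hx
      · exact hsubR (hRsub hx)
      · rw [hALdef] at hx
        simp only [Finset.coe_image, mem_image, Finset.mem_coe] at hx
        obtain ⟨y, hy, rfl⟩ := hx
        exact hmapsTo y (hLsub hy)
    · -- cardinality
      have hsub2 : AR ∪ AL ⊆ AR ∪ AL.erase c := by
        intro x hx
        rw [Finset.mem_union] at hx ⊢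
        rcases hx with hx | hx
        · exact Or.inl hx
        · by_cases hxc : x = c
          · subst hxc; exact Or.inl hRc
          · exact Or.inr (Finset.mem_erase.mpr ⟨hxc, hx⟩)
      have h1 : (AR ∪ AL).card ≤ AR.card + (AL.erase c).card :=
        le_trans (Finset.card_le_card hsub2) (Finset.card_union_le _ _)
      have h2 : (AL.erase c).card = AL.card - 1 := Finset.card_erase_of_mem hcAL
      have h3 : 1 ≤ AL.card := Finset.card_pos.mpr ⟨c, hcAL⟩
      have h4 : (AL.card : ℝ) ≤ (AL'.card : ℝ) :=
        Nat.cast_le.mpr (Finset.card_image_le)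
      have h5 : ((AR ∪ AL).card : ℝ) ≤ (AR.card : ℝ) + (AL.card : ℝ) - 1 := by
        have : ((AL.erase c).card : ℝ) = (AL.card : ℝ) - 1 := by
          rw [h2, Nat.cast_sub h3, Nat.cast_one]
        have h6 : ((AR ∪ AL).card : ℝ) ≤ (AR.card : ℝ) + ((AL.erase c).card : ℝ) := by
          exact_mod_cast h1
        linarith
      have h8 : (4:ℝ)/ε = 2/ε + 2/ε := by ring
      linarith
    · -- coverage
      intro t ht
      rcases le_total c t with hct | htc
      · obtain ⟨x, hxA, hxt, hxcov⟩ := hRcov t ⟨hct, ht.2⟩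
        refine ⟨x, Finset.mem_union_left _ hxA, ?_⟩
        rwa [abs_sub_comm, abs_of_nonneg (by linarith)]
      · have hsIcc : 2 * c - t ∈ Icc c (2 * c) := ⟨by linarith, by linarith [ht.1]⟩
        obtain ⟨x, hxA, hxt, hxcov⟩ := hLcov (2 * c - t) hsIcc
        refine ⟨2 * c - x, Finset.mem_union_right _
          (by rw [hALdef, Finset.mem_image]; exact ⟨x, hxA, rfl⟩), ?_⟩
        rw [show 2 * c - (2 * c - t) = t by ring] at hxcov
        have h7 : |(2 * c - x) - t| = (2 * c - t) - x := by
          rw [abs_of_nonneg (by linarith)]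
          ring
        rw [h7]
        exact hxcov
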